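/- arXiv:1811.01521 — 5 statements merged into one kernel-verified Lean document; each statement's English description precedes it below -/
import Mathlib

section
/- Let n ≥ m ≥ 1, let V ⊆ ℝ^m and W ⊆ ℝ^{n−m} be open sets with U = V × W, and let f̄ : V → ℝ^m be smooth. Define f : U → ℝ^m by f(v, w) = f̄(v). For each strictly increasing map I : Fin m → Fin n, let D_I : U → ℝ be the m×m minor determinant of the Jacobian matrix of f with columns selected by I, i.e. D_I(x) = det(∂f_i/∂x_{I(j)})_{1≤i,j≤m}. Then, in the commutative ring C^∞(U, ℝ) of smooth real-valued functions on U, the ideal generated by all the minors D_I equals the principal ideal generated by the single function λ(v, w) = det(Jacobian of f̄ at v). In particular, the Jacobi ideal of f is principal. -/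
private lemma aux_contDiffOn_prod {E : Type*} [NormedAddCommGroup E] [NormedSpace ℝ E]
    {ι : Type*} (s : Finset ι) (t : Set E) (f : ι → E → ℝ)
    (h : ∀ i ∈ s, ContDiffOn ℝ (⊤:ℕ∞) (f i) t) :
    ContDiffOn ℝ (⊤:ℕ∞) (fun x => ∏ i ∈ s, f i x) t := by
  classical
  induction s using Finset.induction with
  | empty => simpa using contDiffOn_const
  | insert a s hi ih =>
    simp only [Finset.prod_insert hi]
    exact (h _ (Finset.mem_insert_self _ _)).mul
      (ih fun i hi' => h i (Finset.mem_insert_of_mem hi'))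

private lemma aux_contDiffOn_det {E : Type*} [NormedAddCommGroup E] [NormedSpace ℝ E]
    {k : ℕ} (t : Set E) (M : E → Matrix (Fin k) (Fin k) ℝ)
    (h : ∀ i j, ContDiffOn ℝ (⊤:ℕ∞) (fun x => M x i j) t) :
    ContDiffOn ℝ (⊤:ℕ∞) (fun x => (M x).det) t := by
  simp only [Matrix.det_apply]
  apply ContDiffOn.sum
  intro σ _
  have : ContDiffOn ℝ (⊤:ℕ∞) (fun x => ∏ i, M x (σ i) i) t :=
    aux_contDiffOn_prod _ _ _ fun i _ => h (σ i) i
  simpa [Units.smul_def, zsmul_eq_mul] using this.const_smul ((Equiv.Perm.sign σ : ℤ) : ℝ)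

private lemma aux_strictMono_fin_id {k : ℕ} (g : Fin k → Fin k) (hg : StrictMono g) :
    ∀ j, g j = j := by
  intro j
  have hwf : WellFoundedLT (Fin k) := inferInstance
  have hsurj : Function.Surjective g := Finite.surjective_of_injective hg.injective
  have h1 : Set.range g = Set.range (id : Fin k → Fin k) := by
    simp [Set.range_eq_univ.2 hsurj]
  have h2 := (@StrictMono.range_inj (Fin k) (Fin k) _ _ _ g (fun x => x) hg
    (strictMono_id (α := Fin k))).1 h1
  exact congrFun h2 j



/-- The commutative ring `C^∞(U, ℝ)` of smooth real-valued functions on a set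
`U ⊆ E`, realized as the subring of `U → ℝ` (pointwise operations) consisting of
the functions admitting an extension which is `C^∞` on `U`. -/
def smoothFunctionsOn {E : Type*} [NormedAddCommGroup E] [NormedSpace ℝ E]
    (U : Set E) : Subring (U → ℝ) where
  carrier := {g | ∃ G : E → ℝ, ContDiffOn ℝ (⊤ : ℕ∞) G U ∧ ∀ x : U, g x = G x}
  zero_mem' := ⟨0, contDiffOn_const, fun _ => rfl⟩
  one_mem' := ⟨1, contDiffOn_const, fun _ => rfl⟩
  add_mem' := by
    rintro g₁ g₂ ⟨G₁, hG₁, h₁⟩ ⟨G₂, hG₂, h₂⟩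
    exact ⟨G₁ + G₂, hG₁.add hG₂, fun x => by simp [h₁ x, h₂ x]⟩
  mul_mem' := by
    rintro g₁ g₂ ⟨G₁, hG₁, h₁⟩ ⟨G₂, hG₂, h₂⟩
    exact ⟨G₁ * G₂, hG₁.mul hG₂, fun x => by simp [h₁ x, h₂ x]⟩
  neg_mem' := by
    rintro g ⟨G, hG, h⟩
    exact ⟨-G, hG.neg, fun x => by simp [h x]⟩

/-- Let `n ≥ m ≥ 1`, `U = V ×ˢ W` with `V ⊆ ℝᵐ`, `W ⊆ ℝ^(n-m)` open,
and let `f (v, w) = f̄ v` with `f̄ : V → ℝᵐ` smooth. Indexing the `n` coordinates of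
`U ⊆ ℝᵐ × ℝ^(n-m)` by the basis vectors `b j`, and letting `D I` be the `m × m` minor
of the Jacobian of `f` with columns selected by a strictly increasing `I : Fin m → Fin n`,
then in the ring `C^∞(U, ℝ)` the ideal generated by all the minors `D I` equals the
principal ideal generated by `λ (v, w) = det (Jacobian of f̄ at v)`. In particular the
Jacobi ideal of `f` is principal. -/
theorem stmt_4 {n m : ℕ} (hm : 1 ≤ m) (hmn : m ≤ n)
    (V : Set (Fin m → ℝ)) (W : Set (Fin (n - m) → ℝ))
    (hVopen : IsOpen V) (hWopen : IsOpen W)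
    (fbar : (Fin m → ℝ) → (Fin m → ℝ)) (hfbar : ContDiffOn ℝ (⊤ : ℕ∞) fbar V)
    (f : (Fin m → ℝ) × (Fin (n - m) → ℝ) → (Fin m → ℝ))
    (hf : f = fun p => fbar p.1)
    -- `b j` is the `j`-th standard basis vector of `ℝⁿ = ℝᵐ × ℝ^(n-m)`
    (b : Fin n → (Fin m → ℝ) × (Fin (n - m) → ℝ))
    (hb : b = fun j =>
      Sum.elim (fun i : Fin m => ((Pi.single i 1 : Fin m → ℝ), 0))
        (fun i : Fin (n - m) => (0, (Pi.single i 1 : Fin (n - m) → ℝ)))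
        (finSumFinEquiv.symm (Fin.cast (Nat.add_sub_cancel' hmn).symm j)))
    -- `D I` is the minor of the Jacobian matrix of `f` with columns `I`
    (D : (Fin m → Fin n) → (V ×ˢ W : Set ((Fin m → ℝ) × (Fin (n - m) → ℝ))) → ℝ)
    (hD : D = fun (I : Fin m → Fin n)
        (x : (V ×ˢ W : Set ((Fin m → ℝ) × (Fin (n - m) → ℝ)))) =>
      (Matrix.of fun i j : Fin m => fderiv ℝ f x.val (b (I j)) i).det)
    -- `lam` is the Jacobian determinant of the reduction `f̄`, viewed on `U`
    (lam : (V ×ˢ W : Set ((Fin m → ℝ) × (Fin (n - m) → ℝ))) → ℝ)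
    (hlam : lam = fun (x : (V ×ˢ W : Set ((Fin m → ℝ) × (Fin (n - m) → ℝ)))) =>
      (Matrix.of fun i j : Fin m => fderiv ℝ fbar x.val.1 (Pi.single j 1) i).det) :
    ∃ lamS : smoothFunctionsOn (V ×ˢ W),
      (lamS : (V ×ˢ W : Set ((Fin m → ℝ) × (Fin (n - m) → ℝ))) → ℝ) = lam ∧
      (∀ I : Fin m → Fin n, StrictMono I →
        ∃ d : smoothFunctionsOn (V ×ˢ W),
          (d : (V ×ˢ W : Set ((Fin m → ℝ) × (Fin (n - m) → ℝ))) → ℝ) = D I) ∧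
      Ideal.span {d : smoothFunctionsOn (V ×ˢ W) | ∃ I : Fin m → Fin n,
          StrictMono I ∧ (d : (V ×ˢ W : Set ((Fin m → ℝ) × (Fin (n - m) → ℝ))) → ℝ) = D I}
        = Ideal.span {lamS} := by
  classical
  -- fderiv of f on U
  have hfd : ∀ x : ((Fin m → ℝ) × (Fin (n - m) → ℝ)), x ∈ V ×ˢ W →
      fderiv ℝ f x = (fderiv ℝ fbar x.1).comp
        (ContinuousLinearMap.fst ℝ (Fin m → ℝ) (Fin (n - m) → ℝ)) := by
    intro x hx
    have h1 : DifferentiableAt ℝ fbar x.1 :=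
      (hfbar.contDiffAt (hVopen.mem_nhds hx.1)).differentiableAt (by simp)
    have h2 : HasFDerivAt f ((fderiv ℝ fbar x.1).comp
        (ContinuousLinearMap.fst ℝ (Fin m → ℝ) (Fin (n - m) → ℝ))) x := by
      rw [hf]
      exact h1.hasFDerivAt.comp x (hasFDerivAt_fst)
    exact h2.fderiv
  -- The smooth extension of lam
  set G : ((Fin m → ℝ) × (Fin (n - m) → ℝ)) → ℝ := fun p =>
    (Matrix.of fun i j : Fin m => fderiv ℝ fbar p.1 (Pi.single j 1) i).det with hG
  have hGsmooth : ContDiffOn ℝ (⊤:ℕ∞) G (V ×ˢ W) := by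
    apply aux_contDiffOn_det
    intro i j
    have h1 : ContDiffOn ℝ (⊤:ℕ∞) (fderiv ℝ fbar) V :=
      hfbar.fderiv_of_isOpen hVopen (by exact_mod_cast le_top)
    have h2 : ContDiffOn ℝ (⊤:ℕ∞) (fun p : ((Fin m → ℝ) × (Fin (n - m) → ℝ)) =>
        fderiv ℝ fbar p.1) (V ×ˢ W) :=
      h1.comp contDiff_fst.contDiffOn (fun p hp => hp.1)
    have h3 : ContDiff ℝ (⊤:ℕ∞) (fun L : (Fin m → ℝ) →L[ℝ] (Fin m → ℝ) =>
        L (Pi.single j 1) i) :=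
      by exact ((ContinuousLinearMap.proj i : (Fin m → ℝ) →L[ℝ] ℝ).comp
        (ContinuousLinearMap.apply ℝ (Fin m → ℝ) (Pi.single j 1 : Fin m → ℝ))).contDiff
    exact h3.comp_contDiffOn h2
  have hlamval : ∀ x : (V ×ˢ W : Set ((Fin m → ℝ) × (Fin (n - m) → ℝ))), lam x = G x.val := by
    intro x; rw [hlam]
  have hlamMem : lam ∈ smoothFunctionsOn (V ×ˢ W) := ⟨G, hGsmooth, hlamval⟩
  set lamS : smoothFunctionsOn (V ×ˢ W) := ⟨lam, hlamMem⟩ with hlamS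
  -- Case A: all columns selected among the first m
  have keyA : ∀ I : Fin m → Fin n, StrictMono I → (∀ j : Fin m, (I j : ℕ) < m) →
      D I = lam := by
    intro I hI hcase
    have hIj : ∀ j : Fin m, (I j : ℕ) = (j : ℕ) := by
      intro j
      have := aux_strictMono_fin_id (fun j => (⟨I j, hcase j⟩ : Fin m))
        (fun a c hac => by exact hI hac) j
      simpa [Fin.ext_iff] using this
    have hbI : ∀ j : Fin m, b (I j) = ((Pi.single j 1 : Fin m → ℝ), 0) := by
      intro j
      have hcast : Fin.cast (Nat.add_sub_cancel' hmn).symm (I j) = Fin.castAdd (n - m) j := by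
        ext; simp only [Fin.coe_cast, Fin.coe_castAdd, hIj j]
      simp only [hb, hcast, finSumFinEquiv_symm_apply_castAdd, Sum.elim_inl]
    funext x
    simp only [hD, hlam]
    have hMeq : (Matrix.of fun i j : Fin m => fderiv ℝ f x.val (b (I j)) i)
        = Matrix.of fun i j : Fin m => fderiv ℝ fbar x.val.1 (Pi.single j 1) i := by
      ext i j
      rw [Matrix.of_apply, Matrix.of_apply, hbI j, hfd x.val x.property]
      rfl
    rw [hMeq]
  -- Case B: some column beyond the first m gives a zero column
  have keyB : ∀ I : Fin m → Fin n, (∃ j : Fin m, m ≤ (I j : ℕ)) → D I = 0 := by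
    intro I hcase
    obtain ⟨j0, hj0⟩ := hcase
    have hj0n : (I j0 : ℕ) < n := (I j0).isLt
    have hbI : b (I j0) = (0, (Pi.single (⟨(I j0 : ℕ) - m, by omega⟩ : Fin (n - m)) 1
        : Fin (n - m) → ℝ)) := by
      have hcast : Fin.cast (Nat.add_sub_cancel' hmn).symm (I j0)
          = Fin.natAdd m (⟨(I j0 : ℕ) - m, by omega⟩ : Fin (n - m)) := by
        ext; simp only [Fin.coe_cast, Fin.coe_natAdd]; omega
      simp only [hb, hcast, finSumFinEquiv_symm_apply_natAdd, Sum.elim_inr]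
    funext x
    simp only [hD]
    apply Matrix.det_eq_zero_of_column_eq_zero j0
    intro i
    rw [Matrix.of_apply, hbI, hfd x.val x.property]
    simp
  have key : ∀ I : Fin m → Fin n, StrictMono I → D I = lam ∨ D I = 0 := by
    intro I hI
    by_cases hcase : ∀ j : Fin m, (I j : ℕ) < m
    · exact Or.inl (keyA I hI hcase)
    · push_neg at hcase
      exact Or.inr (keyB I hcase)
  refine ⟨lamS, rfl, ?_, ?_⟩
  · intro I hI
    rcases key I hI with h | h
    · exact ⟨lamS, h.symm⟩
    · exact ⟨0, h.symm⟩
  · apply le_antisymm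
    · rw [Ideal.span_le]
      rintro d ⟨I, hI, hval⟩
      rcases key I hI with h | h
      · have hd : d = lamS := Subtype.ext (by rw [hval, h])
        rw [hd]
        exact Ideal.subset_span rfl
      · have hd : d = 0 := Subtype.ext (by rw [hval, h]; rfl)
        rw [hd]
        exact Ideal.zero_mem _
    · rw [Ideal.span_le]
      rintro d (rfl : d = lamS)
      apply Ideal.subset_span
      refine ⟨Fin.castLE hmn, Fin.strictMono_castLE hmn, ?_⟩
      have := keyA (Fin.castLE hmn) (Fin.strictMono_castLE hmn) (fun j => by simp)
      rw [this]
end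

section
/- Let m ≥ 1, let U be an open neighborhood of 0 in ℝ^m, and let g = (g₁, …, g_m) : U → ℝ^m be a continuous map. Suppose there exist a natural number k ≥ 1 and continuous functions a_{ij} : U → ℝ (for 1 ≤ i, j ≤ m) such that (x_i)^k = Σ_{j=1}^m a_{ij}(x)·g_j(x) for all x ∈ U and all i. Then there exist constants C > 0 and ε > 0 such that ‖x‖^k ≤ C·‖g(x)‖ for all x with ‖x‖ ≤ ε. -/
/-- Łojasiewicz-type estimate for a K-finite germ. If on a neighborhood
`U` of `0 ∈ ℝᵐ` one has `(x i)^k = ∑ j, a i j x * g x j` with continuous coefficients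
`a i j` and continuous `g`, then there are `C > 0` and `ε > 0` such that
`‖x‖^k ≤ C * ‖g x‖` for all `x` with `‖x‖ ≤ ε`. -/
theorem stmt_5 {m : ℕ} (hm : 1 ≤ m)
    (U : Set (EuclideanSpace ℝ (Fin m))) (hUopen : IsOpen U)
    (h0 : (0 : EuclideanSpace ℝ (Fin m)) ∈ U)
    (g : EuclideanSpace ℝ (Fin m) → EuclideanSpace ℝ (Fin m))
    (hg : ContinuousOn g U)
    (k : ℕ) (hk : 1 ≤ k)
    (a : Fin m → Fin m → EuclideanSpace ℝ (Fin m) → ℝ)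
    (ha : ∀ i j, ContinuousOn (a i j) U)
    (heq : ∀ x ∈ U, ∀ i : Fin m, (x i) ^ k = ∑ j : Fin m, a i j x * g x j) :
    ∃ C > (0 : ℝ), ∃ ε > (0 : ℝ), Metric.closedBall (0 : EuclideanSpace ℝ (Fin m)) ε ⊆ U ∧
      ∀ x : EuclideanSpace ℝ (Fin m), ‖x‖ ≤ ε → ‖x‖ ^ k ≤ C * ‖g x‖ := by
  -- find ε with closedBall ε ⊆ U
  obtain ⟨r, hr, hrU⟩ := Metric.isOpen_iff.mp hUopen 0 h0
  set ε : ℝ := r / 2 with hε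
  have hεpos : 0 < ε := by positivity
  have hball : Metric.closedBall (0 : EuclideanSpace ℝ (Fin m)) ε ⊆ U := by
    refine (Metric.closedBall_subset_ball ?_).trans hrU
    linarith
  -- bound the coefficient sum on the compact closed ball
  set F : EuclideanSpace ℝ (Fin m) → ℝ := fun x => ∑ i : Fin m, ∑ j : Fin m, |a i j x|
  have hFcont : ContinuousOn F U := by
    apply continuousOn_finset_sum
    intro i _
    apply continuousOn_finset_sum
    intro j _
    exact (ha i j).abs
  obtain ⟨A, hA⟩ := (isCompact_closedBall (0 : EuclideanSpace ℝ (Fin m)) ε).exists_bound_of_continuousOn (hFcont.mono hball)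
  set B : ℝ := max A 1 with hB
  have hBpos : (0 : ℝ) < B := lt_of_lt_of_le one_pos (le_max_right _ _)
  set C : ℝ := (Real.sqrt m) ^ k * B with hC
  have hm0 : (0 : ℝ) < m := by exact_mod_cast hm
  have hsm : 0 < Real.sqrt m := Real.sqrt_pos.mpr hm0
  have hCpos : 0 < C := by positivity
  refine ⟨C, hCpos, ε, hεpos, hball, ?_⟩
  intro x hx
  have hxU : x ∈ U := hball (by simpa [Metric.mem_closedBall, dist_zero_right] using hx)
  -- some coordinate i maximizes |x i|
  obtain ⟨i, _, hi⟩ := Finset.exists_max_image (Finset.univ : Finset (Fin m))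
    (fun i => |x i|) ⟨⟨0, hm⟩, Finset.mem_univ _⟩
  -- ‖x‖ ≤ √m * |x i|
  have hnorm : ‖x‖ ≤ Real.sqrt m * |x i| := by
    rw [EuclideanSpace.norm_eq]
    have h1 : ∑ j : Fin m, ‖x j‖ ^ 2 ≤ (m : ℝ) * |x i| ^ 2 := by
      calc ∑ j : Fin m, ‖x j‖ ^ 2 ≤ ∑ _j : Fin m, |x i| ^ 2 := by
            apply Finset.sum_le_sum
            intro j _
            have := hi j (Finset.mem_univ j)
            rw [Real.norm_eq_abs]
            exact pow_le_pow_left₀ (abs_nonneg _) this 2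
        _ = (m : ℝ) * |x i| ^ 2 := by simp [mul_comm]
    calc Real.sqrt (∑ j : Fin m, ‖x j‖ ^ 2) ≤ Real.sqrt ((m : ℝ) * |x i| ^ 2) :=
          Real.sqrt_le_sqrt h1
      _ = Real.sqrt m * |x i| := by
          rw [Real.sqrt_mul (le_of_lt hm0), Real.sqrt_sq_eq_abs, abs_abs]
  -- |x i|^k ≤ B * ‖g x‖
  have hcoord : ∀ j : Fin m, |g x j| ≤ ‖g x‖ := by
    intro j
    have h2 : |g x j| ^ 2 ≤ ∑ l : Fin m, ‖g x l‖ ^ 2 := by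
      have := Finset.single_le_sum (f := fun l => ‖g x l‖ ^ 2)
        (fun l _ => by positivity) (Finset.mem_univ j)
      simpa [Real.norm_eq_abs] using this
    have := Real.sqrt_le_sqrt h2
    rwa [Real.sqrt_sq (abs_nonneg _), ← EuclideanSpace.norm_eq] at this
  have hFx : F x ≤ B := le_trans (le_trans (le_abs_self _)
    (by simpa [Real.norm_eq_abs] using hA x (by simpa [Metric.mem_closedBall, dist_zero_right] using hx)))
    (le_max_left _ _)
  have hkey : |x i| ^ k ≤ B * ‖g x‖ := by
    have h3 : |x i| ^ k = |(x i) ^ k| := (abs_pow _ _).symm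
    rw [h3, heq x hxU i]
    calc |∑ j : Fin m, a i j x * g x j| ≤ ∑ j : Fin m, |a i j x * g x j| :=
          Finset.abs_sum_le_sum_abs _ _
      _ ≤ ∑ j : Fin m, |a i j x| * ‖g x‖ := by
          apply Finset.sum_le_sum
          intro j _
          rw [abs_mul]
          exact mul_le_mul_of_nonneg_left (hcoord j) (abs_nonneg _)
      _ = (∑ j : Fin m, |a i j x|) * ‖g x‖ := (Finset.sum_mul _ _ _).symm
      _ ≤ B * ‖g x‖ := by
          apply mul_le_mul_of_nonneg_right _ (norm_nonneg _)
          refine le_trans ?_ hFx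
          exact Finset.single_le_sum (f := fun i => ∑ j : Fin m, |a i j x|)
            (fun i _ => Finset.sum_nonneg fun j _ => abs_nonneg _) (Finset.mem_univ i)
  calc ‖x‖ ^ k ≤ (Real.sqrt m * |x i|) ^ k :=
        pow_le_pow_left₀ (norm_nonneg _) hnorm k
    _ = (Real.sqrt m) ^ k * |x i| ^ k := mul_pow _ _ _
    _ ≤ (Real.sqrt m) ^ k * (B * ‖g x‖) :=
        mul_le_mul_of_nonneg_left hkey (by positivity)
    _ = C * ‖g x‖ := by ring
end

section
/- Let m ≥ 1, let U be an open neighborhood of 0 in ℝ^m, and let g = (g₁, …, g_m) : U → ℝ^m be a continuous map. Suppose there exist a natural number k ≥ 1 and continuous functions a_{ij} : U → ℝ (for 1 ≤ i, j ≤ m) such that (x_i)^k = Σ_{j=1}^m a_{ij}(x)·g_j(x) for all x ∈ U and all i. Then: (1) 0 is an isolated point of the zero set g⁻¹(0), i.e. there is ε > 0 such that g(x) ≠ 0 whenever 0 < ‖x‖ ≤ ε; and (2) there is ε > 0 such that for every open neighborhood W′ of 0 in ℝ^m there exists δ > 0 with {x : ‖x‖ ≤ ε and ‖g(x)‖ <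 δ} ⊆ W′. -/
/-- For a K-finite germ `g` at `0 ∈ ℝᵐ` (concretely: each `(x i)^k` is a
continuous-coefficient combination of the components of `g` near `0`):
(1) `0` is an isolated zero of `g`, and (2) preimages of sufficiently small
neighborhoods of `0` in the target are contained in any prescribed neighborhood
`W'` of `0` in the source. -/
theorem stmt_6 {m : ℕ} (hm : 1 ≤ m)
    (U : Set (EuclideanSpace ℝ (Fin m))) (hUopen : IsOpen U)
    (h0 : (0 : EuclideanSpace ℝ (Fin m)) ∈ U)
    (g : EuclideanSpace ℝ (Fin m) → EuclideanSpace ℝ (Fin m))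
    (hg : ContinuousOn g U)
    (k : ℕ) (hk : 1 ≤ k)
    (a : Fin m → Fin m → EuclideanSpace ℝ (Fin m) → ℝ)
    (ha : ∀ i j, ContinuousOn (a i j) U)
    (heq : ∀ x ∈ U, ∀ i : Fin m, (x i) ^ k = ∑ j : Fin m, a i j x * g x j) :
    (∃ ε > (0 : ℝ), Metric.closedBall (0 : EuclideanSpace ℝ (Fin m)) ε ⊆ U ∧
      ∀ x : EuclideanSpace ℝ (Fin m), 0 < ‖x‖ → ‖x‖ ≤ ε → g x ≠ 0) ∧
    (∃ ε > (0 : ℝ), Metric.closedBall (0 : EuclideanSpace ℝ (Fin m)) ε ⊆ U ∧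
      ∀ W' : Set (EuclideanSpace ℝ (Fin m)), IsOpen W' → 0 ∈ W' →
        ∃ δ > (0 : ℝ), ∀ x : EuclideanSpace ℝ (Fin m), ‖x‖ ≤ ε → ‖g x‖ < δ → x ∈ W') := by
  -- Key fact: the only zero of g in U is 0.
  have key : ∀ x ∈ U, g x = 0 → x = 0 := by
    intro x hxU hgx
    ext i
    have h := heq x hxU i
    simp only [hgx] at h
    have : (x i) ^ k = 0 := by
      rw [h]
      apply Finset.sum_eq_zero
      intro j _
      simp
    have := pow_eq_zero_iff (Nat.one_le_iff_ne_zero.mp hk) |>.mp this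
    simpa using this
  -- choose ε with closedBall 0 ε ⊆ U
  obtain ⟨ε, hε, hball⟩ := Metric.isOpen_iff.mp hUopen 0 h0
  set ε' := ε / 2 with hε'def
  have hε' : 0 < ε' := by positivity
  have hsub : Metric.closedBall (0 : EuclideanSpace ℝ (Fin m)) ε' ⊆ U := by
    refine subset_trans ?_ hball
    intro x hx
    rw [Metric.mem_closedBall] at hx
    rw [Metric.mem_ball]
    linarith
  constructor
  · refine ⟨ε', hε', hsub, ?_⟩
    intro x hx hxε hgx
    have hxU : x ∈ U := hsub (by simpa [Metric.mem_closedBall, dist_zero_right] using hxε)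
    have := key x hxU hgx
    rw [this] at hx
    simp at hx
  · refine ⟨ε', hε', hsub, ?_⟩
    intro W' hW'open hW'0
    set K : Set (EuclideanSpace ℝ (Fin m)) :=
      Metric.closedBall (0 : EuclideanSpace ℝ (Fin m)) ε' \ W' with hKdef
    have hKcompact : IsCompact K :=
      (isCompact_closedBall _ _).diff hW'open
    by_cases hKne : K.Nonempty
    · have hcont : ContinuousOn (fun x => ‖g x‖) K :=
        (hg.mono (hKdef ▸ Set.diff_subset.trans hsub)).norm
      obtain ⟨x₀, hx₀K, hx₀min⟩ := hKcompact.exists_isMinOn hKne hcont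
      have hx₀U : x₀ ∈ U := hsub hx₀K.1
      have hgx₀ : g x₀ ≠ 0 := by
        intro h
        have := key x₀ hx₀U h
        rw [this] at hx₀K
        exact hx₀K.2 hW'0
      refine ⟨‖g x₀‖, norm_pos_iff.mpr hgx₀, ?_⟩
      intro x hxε hgx
      by_contra hxW'
      have hxK : x ∈ K := ⟨by simpa [Metric.mem_closedBall, dist_zero_right] using hxε, hxW'⟩
      exact absurd (hx₀min hxK) (by simpa using not_le.mpr hgx)
    · refine ⟨1, one_pos, ?_⟩
      intro x hxε _
      by_contra hxW'
      exact hKne ⟨x, ⟨by simpa [Metric.mem_closedBall, dist_zero_right] using hxε, hxW'⟩⟩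
end

section
/- Let U be an open neighborhood of 0 in ℝ³ and let ξ = (ξ₁, ξ₂, ξ₃) : U → ℝ³ be a continuous map such that ξ₁(x)·x₁ + ξ₂(x)·x₂ + ξ₃(x)·x₃ = 0 for all x = (x₁, x₂, x₃) ∈ U. Then ξ(0) = 0. In particular, there is no continuous nowhere-vanishing vector field ξ near 0 in ℝ³ satisfying the identity ⟨ξ(x), x⟩ = 0 on a neighborhood of 0. -/
/-- If `ξ` is a continuous vector field on a neighborhood `U` of `0` in `ℝ³`
with `ξ₁(x)x₁ + ξ₂(x)x₂ + ξ₃(x)x₃ = 0` on `U`, then `ξ(0) = 0`; in particular there is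
no continuous nowhere-vanishing vector field near `0` satisfying `⟨ξ(x), x⟩ = 0`. -/
theorem stmt_7 (U : Set (EuclideanSpace ℝ (Fin 3))) (hUopen : IsOpen U)
    (h0 : (0 : EuclideanSpace ℝ (Fin 3)) ∈ U)
    (ξ : EuclideanSpace ℝ (Fin 3) → EuclideanSpace ℝ (Fin 3))
    (hcont : ContinuousOn ξ U)
    (horth : ∀ x ∈ U, ∑ i : Fin 3, ξ x i * x i = 0) :
    ξ 0 = 0 ∧ ¬ (∀ x ∈ U, ξ x ≠ 0) := by
  set c := ξ 0 with hc
  have hξ0 : ContinuousAt ξ 0 := hcont.continuousAt (hUopen.mem_nhds h0)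
  -- the map t ↦ t • c tends to 0 as t → 0⁺
  have hsm : Filter.Tendsto (fun t : ℝ => t • c) (nhdsWithin 0 (Set.Ioi 0)) (nhds 0) := by
    have : Filter.Tendsto (fun t : ℝ => t • c) (nhds 0) (nhds ((0:ℝ) • c)) :=
      (continuous_id.smul continuous_const).tendsto 0
    simpa using this.mono_left nhdsWithin_le_nhds
  have hmem : ∀ᶠ t in nhdsWithin (0:ℝ) (Set.Ioi 0), (t • c) ∈ U :=
    hsm (hUopen.mem_nhds h0)
  -- g t := ⟨ξ(t•c), c⟩
  have hg : Filter.Tendsto (fun t : ℝ => ∑ i : Fin 3, ξ (t • c) i * c i)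
      (nhdsWithin 0 (Set.Ioi 0)) (nhds (∑ i : Fin 3, c i * c i)) := by
    have hξt : Filter.Tendsto (fun t : ℝ => ξ (t • c)) (nhdsWithin 0 (Set.Ioi 0)) (nhds c) :=
      hξ0.tendsto.comp hsm
    have : Continuous fun y : EuclideanSpace ℝ (Fin 3) => ∑ i : Fin 3, y i * c i :=
      continuous_finset_sum _ fun i _ =>
        (((continuous_apply i).comp (PiLp.continuous_ofLp 2 fun _ : Fin 3 => ℝ)).mul
          continuous_const)
    exact (this.tendsto c).comp hξt
  have hgz : ∀ᶠ t in nhdsWithin (0:ℝ) (Set.Ioi 0),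
      (∑ i : Fin 3, ξ (t • c) i * c i) = 0 := by
    filter_upwards [hmem, self_mem_nhdsWithin] with t ht htpos
    have h1 := horth (t • c) ht
    have h2 : ∑ i : Fin 3, ξ (t • c) i * (t • c) i
        = t * ∑ i : Fin 3, ξ (t • c) i * c i := by
      rw [Finset.mul_sum]
      refine Finset.sum_congr rfl fun i _ => ?_
      simp [PiLp.smul_apply, smul_eq_mul]; ring
    rw [h2] at h1
    exact (mul_eq_zero.mp h1).resolve_left (ne_of_gt htpos)
  have hsum : (∑ i : Fin 3, c i * c i) = 0 := by
    have h0' : Filter.Tendsto (fun _ : ℝ => (0:ℝ)) (nhdsWithin 0 (Set.Ioi 0)) (nhds 0) :=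
      tendsto_const_nhds
    have : Filter.Tendsto (fun t : ℝ => ∑ i : Fin 3, ξ (t • c) i * c i)
        (nhdsWithin 0 (Set.Ioi 0)) (nhds 0) := h0'.congr' (by filter_upwards [hgz] with t ht; exact ht.symm)
    exact tendsto_nhds_unique hg this
  have hcz : c = 0 := by
    have hnn : ∀ i ∈ Finset.univ, (0:ℝ) ≤ c i * c i := fun i _ => mul_self_nonneg _
    have := (Finset.sum_eq_zero_iff_of_nonneg hnn).mp hsum
    ext i
    have hi := this i (Finset.mem_univ i)
    have : c i = 0 := by nlinarith [hi]
    simpa using this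
  exact ⟨hcz, fun h => (h 0 h0) (hc ▸ hcz)⟩
end

section
/- Let f : ℝ² → ℝ² be the fold map f(x, y) = (x, y²). Then the set of homeomorphisms σ : ℝ² → ℝ² satisfying f ∘ σ = f consists of exactly two elements: the identity and the reflection (x, y) ↦ (x, −y). Consequently, the right symmetry group of f is isomorphic to ℤ/2ℤ. -/
/-- The right symmetry group of a map `f : X → Y`: the group (under composition) of
self-homeomorphisms `σ` of `X` with `f ∘ σ = f`, realized as a subgroup of the
group of bijections (permutations) of `X`. -/
def homeoRightSymmetryGroup {X Y : Type*} [TopologicalSpace X] (f : X → Y) :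
    Subgroup (Equiv.Perm X) where
  carrier := {e | Continuous e ∧ Continuous e.symm ∧ f ∘ e = f}
  one_mem' := ⟨continuous_id, continuous_id, rfl⟩
  mul_mem' := by
    rintro a b ⟨ha1, ha2, ha3⟩ ⟨hb1, hb2, hb3⟩
    refine ⟨ha1.comp hb1, hb2.comp ha2, ?_⟩
    have : (f ∘ a) ∘ b = f := by rw [ha3, hb3]
    exact this
  inv_mem' := by
    rintro a ⟨ha1, ha2, ha3⟩
    refine ⟨ha2, ha1, ?_⟩
    funext x
    have := congrFun ha3 (a⁻¹ x)
    simpa using this.symm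

/-- The reflection `(x, y) ↦ (x, -y)` as a permutation of `ℝ²`. -/
def reflPerm : Equiv.Perm (ℝ × ℝ) where
  toFun p := (p.1, -p.2)
  invFun p := (p.1, -p.2)
  left_inv p := by simp
  right_inv p := by simp

lemma fold_classify (σ : (ℝ × ℝ) ≃ₜ (ℝ × ℝ))
    (h : (fun p : ℝ × ℝ => (p.1, p.2 ^ 2)) ∘ σ = fun p : ℝ × ℝ => (p.1, p.2 ^ 2)) :
    (∀ p : ℝ × ℝ, σ p = p) ∨ (∀ p : ℝ × ℝ, σ p = (p.1, -p.2)) := by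
  have h0 : ∀ p : ℝ × ℝ, ((σ p).1, (σ p).2 ^ 2) = (p.1, p.2 ^ 2) := fun p => congrFun h p
  have h1 : ∀ p : ℝ × ℝ, (σ p).1 = p.1 := fun p => (Prod.ext_iff.mp (h0 p)).1
  have h2 : ∀ p : ℝ × ℝ, (σ p).2 ^ 2 = p.2 ^ 2 := fun p => (Prod.ext_iff.mp (h0 p)).2
  have h3 : ∀ p : ℝ × ℝ, (σ p).2 = p.2 ∨ (σ p).2 = -p.2 := fun p =>
    sq_eq_sq_iff_eq_or_eq_neg.mp (h2 p)
  have hzero : ∀ p : ℝ × ℝ, p.2 = 0 → (σ p).2 = 0 := by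
    intro p hp
    have := h2 p
    rw [hp] at this
    simpa [pow_eq_zero_iff] using this
  have hcont : Continuous fun p : ℝ × ℝ => (σ p).2 := continuous_snd.comp σ.continuous
  have hU1 : IsOpen {p : ℝ × ℝ | 0 < (σ p).2} := isOpen_lt continuous_const hcont
  have hU2 : IsOpen {p : ℝ × ℝ | (σ p).2 < 0} := isOpen_lt hcont continuous_const
  have hdisj : Disjoint {p : ℝ × ℝ | 0 < (σ p).2} {p : ℝ × ℝ | (σ p).2 < 0} := by
    rw [Set.disjoint_left]
    intro p hp1 hp2
    simp only [Set.mem_setOf_eq] at hp1 hp2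
    linarith
  have hVpre : IsPreconnected {p : ℝ × ℝ | 0 < p.2} := by
    have : {p : ℝ × ℝ | 0 < p.2} = Set.univ ×ˢ Set.Ioi (0 : ℝ) := by
      ext p; simp [Set.mem_prod]
    rw [this]
    exact (convex_univ.prod (convex_Ioi (0 : ℝ))).isPreconnected
  have hVsub : {p : ℝ × ℝ | 0 < p.2} ⊆
      {p : ℝ × ℝ | 0 < (σ p).2} ∪ {p : ℝ × ℝ | (σ p).2 < 0} := by
    intro p hp
    simp only [Set.mem_setOf_eq] at hp ⊢
    rcases h3 p with h' | h'
    · left; show 0 < (σ p).2; rw [h']; exact hp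
    · right; show (σ p).2 < 0; rw [h']; linarith
  -- injectivity consequence
  have hinj : ∀ p : ℝ × ℝ, p.2 ≠ 0 → (σ p).2 ≠ (σ (p.1, -p.2)).2 := by
    intro p hp hne
    have hfst : (σ p).1 = (σ (p.1, -p.2)).1 := by rw [h1 p, h1 (p.1, -p.2)]
    have : σ p = σ (p.1, -p.2) := Prod.ext hfst hne
    have := σ.injective this
    have := congrArg Prod.snd this
    simp only at this
    exact hp (by linarith)
  rcases hVpre.subset_or_subset hU1 hU2 hdisj hVsub with hsub | hsub
  · -- identity case
    have key : ∀ q : ℝ × ℝ, 0 < q.2 → (σ q).2 = q.2 := by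
      intro q hq
      rcases h3 q with h' | h'
      · exact h'
      · exfalso
        have : 0 < (σ q).2 := hsub hq
        rw [h'] at this
        linarith
    left
    intro p
    refine Prod.ext (h1 p) ?_
    rcases lt_trichotomy p.2 0 with hneg | hz | hpos
    · have hq : (σ (p.1, -p.2)).2 = -p.2 := key (p.1, -p.2) (by simpa using hneg.le.lt_of_ne' (ne_of_lt hneg).symm)
      rcases h3 p with h' | h'
      · exact h'
      · exfalso
        exact hinj p (ne_of_lt hneg) (by rw [h', hq])
    · rw [hzero p hz, hz]
    · exact key p hpos
  · -- reflection case
    have key : ∀ q : ℝ × ℝ, 0 < q.2 → (σ q).2 = -q.2 := by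
      intro q hq
      rcases h3 q with h' | h'
      · exfalso
        have : (σ q).2 < 0 := hsub hq
        rw [h'] at this
        linarith
      · exact h'
    right
    intro p
    refine Prod.ext (h1 p) ?_
    rcases lt_trichotomy p.2 0 with hneg | hz | hpos
    · have hq : (σ (p.1, -p.2)).2 = p.2 := by
        have := key (p.1, -p.2) (by simp only; linarith)
        simpa using this
      rcases h3 p with h' | h'
      · exfalso
        exact hinj p (ne_of_lt hneg) (by rw [h', hq])
      · exact h'
    · rw [hzero p hz, hz, neg_zero]
    · exact key p hpos

lemma reflPerm_mem :
    reflPerm ∈ homeoRightSymmetryGroup (fun p : ℝ × ℝ => (p.1, p.2 ^ 2)) := by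
  refine ⟨?_, ?_, ?_⟩
  · exact continuous_fst.prodMk continuous_snd.neg
  · exact continuous_fst.prodMk continuous_snd.neg
  · funext p
    simp [reflPerm, neg_sq]

/-- For the fold map `f (x, y) = (x, y²)` on `ℝ²`, the homeomorphisms
`σ` of `ℝ²` with `f ∘ σ = f` are exactly the identity and the reflection
`(x, y) ↦ (x, -y)`; consequently the right symmetry group of `f` is isomorphic
to `ℤ/2ℤ`. -/
theorem stmt_8 :
    (∀ σ : (ℝ × ℝ) ≃ₜ (ℝ × ℝ),
        (fun p : ℝ × ℝ => (p.1, p.2 ^ 2)) ∘ σ = (fun p : ℝ × ℝ => (p.1, p.2 ^ 2)) ↔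
          ((∀ p : ℝ × ℝ, σ p = p) ∨ (∀ p : ℝ × ℝ, σ p = (p.1, -p.2)))) ∧
    Nonempty ((homeoRightSymmetryGroup (fun p : ℝ × ℝ => (p.1, p.2 ^ 2)))
        ≃* Multiplicative (ZMod 2)) := by
  constructor
  · intro σ
    constructor
    · exact fold_classify σ
    · rintro (hid | hrefl)
      · funext p; rw [Function.comp_apply, hid p]
      · funext p; rw [Function.comp_apply, hrefl p]; simp [neg_sq]
  · set G := homeoRightSymmetryGroup (fun p : ℝ × ℝ => (p.1, p.2 ^ 2)) with hG
    have hset : (G : Set (Equiv.Perm (ℝ × ℝ))) = {1, reflPerm} := by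
      ext e
      constructor
      · rintro ⟨hc1, hc2, hc3⟩
        rcases fold_classify ⟨e, hc1, hc2⟩ hc3 with h' | h'
        · left; exact Equiv.ext fun p => h' p
        · right; exact Equiv.ext fun p => h' p
      · rintro (rfl | rfl)
        · exact G.one_mem
        · exact reflPerm_mem
    have hne : (1 : Equiv.Perm (ℝ × ℝ)) ≠ reflPerm := by
      intro h
      have := congrArg (fun e : Equiv.Perm (ℝ × ℝ) => (e ((0 : ℝ), (1 : ℝ))).2) h
      simp [reflPerm] at this
      linarith
    have hcard : Nat.card G = 2 := by
      have : Nat.card G = Nat.card (G : Set (Equiv.Perm (ℝ × ℝ))) := rfl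
      rw [this, hset, Nat.card_coe_set_eq, Set.ncard_pair hne]
    haveI : Fact (Nat.Prime 2) := ⟨Nat.prime_two⟩
    have hcyc : IsCyclic G := isCyclic_of_prime_card hcard
    have key : ∀ n : ℕ, Nat.card G = n → Nonempty (G ≃* Multiplicative (ZMod n)) := by
      rintro n rfl
      exact ⟨(zmodCyclicMulEquiv hcyc).symm⟩
    exact key 2 hcard
end
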